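/- For every real α with 1 < α < 2 and every integer n ≥ 1, (∑_{i=1}^n i)^α / ∑_{i=1}^n i^{2α−1} ≤ (∑_{i=1}^{n+1} i)^α / ∑_{i=1}^{n+1} i^{2α−1}. -/

import Mathlib

open Real intervalIntegral

private lemma karamata2 {β a b c d : ℝ} (hβ0 : 0 ≤ β) (hβ1 : β ≤ 1) (hc : 0 ≤ c)
    (hca : c ≤ a) (had : a ≤ d) (hsum : a + b = c + d) :
    c ^ β + d ^ β ≤ a ^ β + b ^ β := by
  have hcd : c ≤ d := le_trans hca had
  rcases eq_or_lt_of_le hcd with h | hlt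
  · have h1 : a = c := le_antisymm (h ▸ had) hca
    have h2 : b = d := by rw [h1] at hsum; linarith
    rw [h1, h2]
  · set l := (d - a) / (d - c) with hl
    have hdc : 0 < d - c := by linarith
    have hl0 : 0 ≤ l := div_nonneg (by linarith) (by linarith)
    have hl1 : 0 ≤ 1 - l := by
      have : l ≤ 1 := (div_le_one hdc).mpr (by linarith)
      linarith
    have ha' : l * c + (1 - l) * d = a := by
      have h := div_mul_cancel₀ (d - a) (ne_of_gt hdc); rw [← hl] at h; linarith
    have hb' : (1 - l) * c + l * d = b := by
      have hb : b = c + d - a := by linarith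
      have h := div_mul_cancel₀ (d - a) (ne_of_gt hdc); rw [← hl] at h; linarith
    have cav := Real.concaveOn_rpow hβ0 hβ1
    have hd0 : (0:ℝ) ≤ d := le_trans hc hcd
    have H1 := cav.2 (Set.mem_Ici.mpr hc) (Set.mem_Ici.mpr hd0) hl0 hl1 (by ring)
    have H2 := cav.2 (Set.mem_Ici.mpr hc) (Set.mem_Ici.mpr hd0) hl1 hl0 (by ring)
    simp only [smul_eq_mul] at H1 H2
    rw [ha'] at H1
    rw [hb'] at H2
    linarith

private lemma integral_shift {y α : ℝ} (hy : 0 ≤ y) (hα : 0 < α) :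
    ∫ s in (0:ℝ)..2, (y + s) ^ (α - 1) = ((y + 2) ^ α - y ^ α) / α := by
  have h1 : (fun s : ℝ => (y + s) ^ (α - 1)) = fun s : ℝ => (fun t : ℝ => t ^ (α - 1)) (s + y) := by
    funext s; rw [add_comm]
  rw [h1, intervalIntegral.integral_comp_add_right (fun t : ℝ => t ^ (α - 1)) y]
  rw [integral_rpow (Or.inl (by linarith))]
  have h2 : α - 1 + 1 = α := by ring
  rw [h2, zero_add, add_comm 2 y]

private lemma dagger {x α : ℝ} (hx : 1 ≤ x) (hα1 : 1 < α) (hα2 : α < 2) :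
    (x + 1) ^ (α - 1) * ((x + 1) ^ α - (x - 1) ^ α) ≤
      x ^ (α - 1) * ((x + 2) ^ α - x ^ α) := by
  set β := α - 1 with hβdef
  have hβ0 : 0 < β := by simp [hβdef]; linarith
  have hβ1 : β ≤ 1 := by simp [hβdef]; linarith
  have hα : (0:ℝ) < α := by linarith
  have hx0 : (0:ℝ) ≤ x := by linarith
  have hx10 : (0:ℝ) ≤ x - 1 := by linarith
  -- continuity
  have cont : ∀ c : ℝ, Continuous fun s : ℝ => (c + s) ^ β := fun c =>
    Continuous.rpow_const (by continuity) (fun s => Or.inr (le_of_lt hβ0))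
  set g : ℝ → ℝ := fun s => x ^ β * (x + s) ^ β - (x + 1) ^ β * (x - 1 + s) ^ β with hg
  have contg : Continuous g := by
    exact (continuous_const.mul (cont x)).sub (continuous_const.mul (cont (x - 1)))
  have int01 : IntervalIntegrable g MeasureTheory.volume 0 1 := contg.intervalIntegrable 0 1
  have int12 : IntervalIntegrable g MeasureTheory.volume 1 2 := contg.intervalIntegrable 1 2
  have int02 : IntervalIntegrable g MeasureTheory.volume 0 2 := contg.intervalIntegrable 0 2
  have intc : IntervalIntegrable (fun s => g (2 - s)) MeasureTheory.volume 0 1 :=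
    (contg.comp (by continuity)).intervalIntegrable 0 1
  -- pointwise inequality on [0,1]
  have pointwise : ∀ s ∈ Set.Icc (0:ℝ) 1, 0 ≤ g s + g (2 - s) := by
    intro s hs
    obtain ⟨hs0, hs1⟩ := hs
    have key : ((x + 1) * (x - 1 + s)) ^ β + ((x + 1) * (x + 1 - s)) ^ β ≤
        (x * (x + s)) ^ β + (x * (x + 2 - s)) ^ β := by
      apply karamata2 (le_of_lt hβ0) hβ1
      · nlinarith
      · nlinarith
      · nlinarith
      · ring
    have e1 : (x * (x + s)) ^ β = x ^ β * (x + s) ^ β :=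
      Real.mul_rpow hx0 (by linarith)
    have e2 : (x * (x + 2 - s)) ^ β = x ^ β * (x + 2 - s) ^ β :=
      Real.mul_rpow hx0 (by linarith)
    have e3 : ((x + 1) * (x - 1 + s)) ^ β = (x + 1) ^ β * (x - 1 + s) ^ β :=
      Real.mul_rpow (by linarith) (by linarith)
    have e4 : ((x + 1) * (x + 1 - s)) ^ β = (x + 1) ^ β * (x + 1 - s) ^ β :=
      Real.mul_rpow (by linarith) (by linarith)
    rw [e1, e2, e3, e4] at key
    have hg1 : g s = x ^ β * (x + s) ^ β - (x + 1) ^ β * (x - 1 + s) ^ β := rfl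
    have hg2 : g (2 - s) = x ^ β * (x + (2 - s)) ^ β - (x + 1) ^ β * (x - 1 + (2 - s)) ^ β := rfl
    have e5 : x + (2 - s) = x + 2 - s := by ring
    have e6 : x - 1 + (2 - s) = x + 1 - s := by ring
    rw [hg1, hg2, e5, e6]
    linarith
  -- the integral over [0,2] is nonnegative
  have hrefl : ∫ s in (0:ℝ)..1, g (2 - s) = ∫ s in (1:ℝ)..2, g s := by
    rw [intervalIntegral.integral_comp_sub_left g 2]
    norm_num
  have split : (∫ s in (0:ℝ)..1, g s) + (∫ s in (1:ℝ)..2, g s) = ∫ s in (0:ℝ)..2, g s :=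
    intervalIntegral.integral_add_adjacent_intervals int01 int12
  have comb : (∫ s in (0:ℝ)..1, (g s + g (2 - s))) = ∫ s in (0:ℝ)..2, g s := by
    rw [intervalIntegral.integral_add int01 intc, hrefl, split]
  have nn : 0 ≤ ∫ s in (0:ℝ)..2, g s := by
    rw [← comb]
    exact intervalIntegral.integral_nonneg (by norm_num) pointwise
  -- compute the integral
  have I1 : ∫ s in (0:ℝ)..2, (x + s) ^ β = ((x + 2) ^ α - x ^ α) / α := by
    have := integral_shift hx0 hα
    simpa [hβdef] using this
  have I2 : ∫ s in (0:ℝ)..2, (x - 1 + s) ^ β = ((x + 1) ^ α - (x - 1) ^ α) / α := by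
    have := integral_shift hx10 hα
    have e : x - 1 + 2 = x + 1 := by ring
    rw [e] at this
    simpa [hβdef] using this
  have expand : (∫ s in (0:ℝ)..2, g s) =
      x ^ β * (((x + 2) ^ α - x ^ α) / α) - (x + 1) ^ β * (((x + 1) ^ α - (x - 1) ^ α) / α) := by
    rw [hg]
    show ∫ s in (0:ℝ)..2, (x ^ β * (x + s) ^ β - (x + 1) ^ β * (x - 1 + s) ^ β) = _
    rw [intervalIntegral.integral_sub (f := fun s => x ^ β * (x + s) ^ β)
      (g := fun s => (x + 1) ^ β * (x - 1 + s) ^ β) ((continuous_const.mul (cont x)).intervalIntegrable 0 2)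
      ((continuous_const.mul (cont (x - 1))).intervalIntegrable 0 2)]
    rw [intervalIntegral.integral_const_mul, intervalIntegral.integral_const_mul, I1, I2]
  rw [expand] at nn
  have h6 : 0 ≤ α * (x ^ β * (((x + 2) ^ α - x ^ α) / α) -
      (x + 1) ^ β * (((x + 1) ^ α - (x - 1) ^ α) / α)) := mul_nonneg (le_of_lt hα) nn
  have h7 : α * (x ^ β * (((x + 2) ^ α - x ^ α) / α) -
      (x + 1) ^ β * (((x + 1) ^ α - (x - 1) ^ α) / α)) =
      x ^ β * ((x + 2) ^ α - x ^ α) - (x + 1) ^ β * ((x + 1) ^ α - (x - 1) ^ α) := by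
    field_simp
  linarith [h7 ▸ h6]

private lemma star {α : ℝ} (hα1 : 1 < α) (hα2 : α < 2) :
    ∀ n : ℕ, 1 ≤ n →
      (n : ℝ) ^ α * ((n : ℝ) + 1) ^ (2 * α - 1) ≤
        (((n : ℝ) + 2) ^ α - (n : ℝ) ^ α) * ∑ i ∈ Finset.Icc 1 n, (i : ℝ) ^ (2 * α - 1) := by
  have hα : (0:ℝ) < α := by linarith
  intro n
  induction n with
  | zero => intro h; omega
  | succ m ih =>
    intro _
    rcases Nat.eq_or_lt_of_le (Nat.one_le_iff_ne_zero.mpr (Nat.succ_ne_zero m)) with h1 | h1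
    · -- base case m + 1 = 1
      have hm : m = 0 := by omega
      subst hm
      norm_num
      have hd := dagger (le_refl (1:ℝ)) hα1 hα2
      norm_num at hd
      rw [Real.zero_rpow (ne_of_gt hα)] at hd
      have e : (2:ℝ) ^ (2 * α - 1) = 2 ^ (α - 1) * 2 ^ α := by
        rw [show 2 * α - 1 = (α - 1) + α by ring, Real.rpow_add (by norm_num : (0:ℝ) < 2)]
      nlinarith [Real.rpow_pos_of_pos (by norm_num : (0:ℝ) < 2) (2 * α - 1)]
    · -- inductive step: m ≥ 1
      have hm1 : 1 ≤ m := by omega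
      rw [Finset.sum_Icc_succ_top (by omega : 1 ≤ m + 1)]
      push_cast
      set N : ℝ := (m : ℝ) with hN
      have IH := ih hm1
      have hN1 : (1:ℝ) ≤ N := by rw [hN]; exact_mod_cast hm1
      have hN0 : (0:ℝ) ≤ N := by linarith
      set T : ℝ := ∑ i ∈ Finset.Icc 1 m, (i : ℝ) ^ (2 * α - 1) with hT
      have hD : 0 < (N + 2) ^ α - N ^ α :=
        sub_pos.mpr (Real.rpow_lt_rpow hN0 (by linarith) hα)
      have hD' : 0 < (N + 1 + 2) ^ α - (N + 1) ^ α :=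
        sub_pos.mpr (Real.rpow_lt_rpow (by linarith) (by linarith) hα)
      have hTpos : 0 < T := by
        rw [hT]
        apply Finset.sum_pos
        · intro i hi
          have : 1 ≤ i := (Finset.mem_Icc.mp hi).1
          exact Real.rpow_pos_of_pos (by exact_mod_cast this) _
        · exact Finset.nonempty_Icc.mpr hm1
      have hdag := dagger (by linarith : (1:ℝ) ≤ N + 1) hα1 hα2
      have hNe1 : N + 1 + 1 = N + 2 := by ring
      have hNe2 : N + 1 - 1 = N := by ring
      rw [hNe1, hNe2] at hdag
      have e1 : (N + 2) ^ (2 * α - 1) = (N + 2) ^ α * (N + 2) ^ (α - 1) := by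
        rw [show 2 * α - 1 = α + (α - 1) by ring, Real.rpow_add (by linarith : (0:ℝ) < N + 2)]
      have e2 : (N + 1) ^ (2 * α - 1) = (N + 1) ^ α * (N + 1) ^ (α - 1) := by
        rw [show 2 * α - 1 = α + (α - 1) by ring, Real.rpow_add (by linarith : (0:ℝ) < N + 1)]
      have hP1 : 0 < (N + 1) ^ α := Real.rpow_pos_of_pos (by linarith) _
      have hP2 : 0 < (N + 2) ^ α := Real.rpow_pos_of_pos (by linarith) _
      have key : ((N + 2) ^ α - N ^ α) * ((N + 1) ^ α * (N + 1 + 1) ^ (2 * α - 1)) ≤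
          ((N + 2) ^ α - N ^ α) *
            (((N + 1 + 2) ^ α - (N + 1) ^ α) * (T + (N + 1) ^ (2 * α - 1))) := by
        rw [hNe1, e1, e2]
        have step1 := mul_le_mul_of_nonneg_left hdag (le_of_lt (mul_pos hP1 hP2))
        have h3 := mul_le_mul_of_nonneg_left IH (le_of_lt hD')
        rw [e2] at h3
        nlinarith [step1, h3]
      exact le_of_mul_le_mul_left key hD

private lemma gauss (n : ℕ) : ∑ i ∈ Finset.Icc 1 n, (i : ℝ) = n * (n + 1) / 2 := by
  induction n with
  | zero => simp
  | succ m ih =>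
    rw [Finset.sum_Icc_succ_top (by omega : 1 ≤ m + 1), ih]
    push_cast
    ring

theorem ratio_decreasing (α : ℝ) (hα1 : 1 < α) (hα2 : α < 2) (n : ℕ) (hn : 1 ≤ n) :
    (∑ i ∈ Finset.Icc 1 n, (i : ℝ)) ^ α / ∑ i ∈ Finset.Icc 1 n, (i : ℝ) ^ (2 * α - 1) ≤
      (∑ i ∈ Finset.Icc 1 (n + 1), (i : ℝ)) ^ α /
        ∑ i ∈ Finset.Icc 1 (n + 1), (i : ℝ) ^ (2 * α - 1) := by
  have hα : (0:ℝ) < α := by linarith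
  have hTpos : ∀ m : ℕ, 1 ≤ m → 0 < ∑ i ∈ Finset.Icc 1 m, (i : ℝ) ^ (2 * α - 1) := by
    intro m hm
    apply Finset.sum_pos
    · intro i hi
      have : 1 ≤ i := (Finset.mem_Icc.mp hi).1
      exact Real.rpow_pos_of_pos (by exact_mod_cast this) _
    · exact Finset.nonempty_Icc.mpr hm
  have hT1 := hTpos n hn
  have hT2 := hTpos (n + 1) (by omega)
  rw [div_le_div_iff₀ hT1 hT2]
  rw [Finset.sum_Icc_succ_top (by omega : 1 ≤ n + 1) (fun i => (i : ℝ) ^ (2 * α - 1))]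
  rw [gauss, gauss]
  push_cast
  set N : ℝ := (n : ℝ) with hN
  have hN1 : (1:ℝ) ≤ N := by rw [hN]; exact_mod_cast hn
  set T : ℝ := ∑ i ∈ Finset.Icc 1 n, (i : ℝ) ^ (2 * α - 1) with hT
  have hS := star hα1 hα2 n hn
  rw [← hT, ← hN] at hS
  have g1 : N * (N + 1) / 2 = ((N + 1) / 2) * N := by ring
  have g2 : (N + 1) * (N + 1 + 1) / 2 = ((N + 1) / 2) * (N + 2) := by ring
  rw [g1, g2]
  have hC : (0:ℝ) < (N + 1) / 2 := by linarith
  rw [Real.mul_rpow (le_of_lt hC) (by linarith), Real.mul_rpow (le_of_lt hC) (by linarith)]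
  have hCpos : 0 < ((N + 1) / 2) ^ α := Real.rpow_pos_of_pos hC α
  have main : N ^ α * (T + (N + 1) ^ (2 * α - 1)) ≤ (N + 2) ^ α * T := by
    nlinarith [hS]
  nlinarith [mul_le_mul_of_nonneg_left main (le_of_lt hCpos)]
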